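/- Let Q ⊂ ℝⁿ be a compact convex polytope (the intersection of finitely many closed half-spaces that is bounded), let d ∈ ℝⁿ be nonzero, and suppose Q₀ = {x ∈ Q : ⟨d, x⟩ = 0} is nonempty. Then there exists a constant C ≥ 0 such that for every z ∈ ℝ and every θ_z ∈ Q with ⟨d, θ_z⟩ = z, there exists θ₀ ∈ Q₀ with ‖θ_z − θ₀‖₂ ≤ C·|z|. -/

import Mathlib

open Finset Filter

/-- The extreme points of a polyhedron are finite: each extreme point is
determined by its set of active constraints. -/
lemma finite_extremePoints_aux {n m : ℕ} (a : Fin m → EuclideanSpace ℝ (Fin n)) (b : Fin m → ℝ)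
    (Q : Set (EuclideanSpace ℝ (Fin n)))
    (hQ : Q = {x | ∀ i, inner ℝ (a i) x ≤ b i}) :
    (Q.extremePoints ℝ).Finite := by
  classical
  set f : EuclideanSpace ℝ (Fin n) → Finset (Fin m) :=
    fun x => Finset.univ.filter (fun i => (inner ℝ (a i) x : ℝ) = b i) with hf
  have hinj : Set.InjOn f (Q.extremePoints ℝ) := by
    intro x hx y hy hxy
    by_contra hne
    set v := y - x with hv
    have hvne : v ≠ 0 := sub_ne_zero.2 (Ne.symm hne)
    have hxQ : ∀ i, (inner ℝ (a i) x : ℝ) ≤ b i := by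
      have := hx.1; rw [hQ] at this; exact this
    have hiff : ∀ i, (inner ℝ (a i) x : ℝ) = b i ↔ (inner ℝ (a i) y : ℝ) = b i := by
      intro i
      have := Finset.ext_iff.mp hxy i
      simpa [hf] using this
    have hev : ∀ i : Fin m, ∀ᶠ ε : ℝ in nhds 0, (inner ℝ (a i) (x + ε • v) : ℝ) ≤ b i := by
      intro i
      rcases eq_or_lt_of_le (hxQ i) with heq | hlt
      · have hy' : (inner ℝ (a i) y : ℝ) = b i := (hiff i).1 heq
        have hv0 : (inner ℝ (a i) v : ℝ) = 0 := by
          rw [hv, inner_sub_right, hy', heq, sub_self]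
        refine Filter.Eventually.of_forall fun ε => ?_
        rw [inner_add_right, real_inner_smul_right, hv0, mul_zero, add_zero, heq]
      · have hcont : ContinuousAt (fun ε : ℝ => (inner ℝ (a i) (x + ε • v) : ℝ)) 0 := by
          have : Continuous fun ε : ℝ => (inner ℝ (a i) x : ℝ) + ε * (inner ℝ (a i) v : ℝ) := by
            continuity
          have heqf : (fun ε : ℝ => (inner ℝ (a i) (x + ε • v) : ℝ))
              = fun ε : ℝ => (inner ℝ (a i) x : ℝ) + ε * (inner ℝ (a i) v : ℝ) := by
            funext ε; rw [inner_add_right, real_inner_smul_right]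
          rw [heqf]; exact this.continuousAt
        have h0 : (inner ℝ (a i) (x + (0:ℝ) • v) : ℝ) < b i := by
          simpa using hlt
        have := hcont.eventually_lt continuousAt_const h0
        exact this.mono fun ε h => le_of_lt h
    have hall : ∀ᶠ ε : ℝ in nhds 0, (x + ε • v) ∈ Q := by
      have := eventually_all.2 hev
      refine this.mono fun ε h => ?_
      rw [hQ]; exact h
    rw [Metric.eventually_nhds_iff] at hall
    obtain ⟨ε, hε, hball⟩ := hall
    set η := ε / 2 with hη
    have hηpos : 0 < η := by positivity
    have hdist : ∀ c : ℝ, |c| = η → dist c (0:ℝ) < ε := by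
      intro c hc; rw [Real.dist_eq, sub_zero, hc, hη]; linarith
    have h1 : x + η • v ∈ Q := hball (hdist η (abs_of_pos hηpos))
    have h2 : x + (-η) • v ∈ Q := hball (hdist (-η) (by rw [abs_neg, abs_of_pos hηpos]))
    have hseg : x ∈ openSegment ℝ (x + (-η) • v) (x + η • v) := by
      refine ⟨1/2, 1/2, by norm_num, by norm_num, by norm_num, ?_⟩
      module
    have hext := hx.2 h2 h1 hseg
    have : x + η • v = x := hx.2 h1 h2 (by rw [openSegment_symm]; exact hseg)
    have hz : η • v = 0 := by
      have := congrArg (fun w => w - x) this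
      simpa [add_sub_cancel_left] using this
    rcases smul_eq_zero.1 hz with h | h
    · exact absurd h (ne_of_gt hηpos)
    · exact hvne h
  exact Set.Finite.of_finite_image (Set.toFinite _) hinj

/-- Mass-shifting lemma: one-sided bounded shifting for a polytope given as a
convex hull of a finite set. -/
lemma aux_shift {n : ℕ} (V : Finset (EuclideanSpace ℝ (Fin n)))
    (Q : Set (EuclideanSpace ℝ (Fin n))) (hQV : Q = convexHull ℝ (V : Set (EuclideanSpace ℝ (Fin n))))
    (d y₀ : EuclideanSpace ℝ (Fin n)) (hy₀Q : y₀ ∈ Q) (hy₀ : (inner ℝ d y₀ : ℝ) = 0)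
    (R : ℝ) (hR : ∀ x ∈ Q, ‖x‖ ≤ R) :
    ∃ C : ℝ, 0 ≤ C ∧ ∀ (z : ℝ) (θz : EuclideanSpace ℝ (Fin n)),
      θz ∈ Q → (inner ℝ d θz : ℝ) = z → 0 < z →
      ∃ θ₀ ∈ Q, (inner ℝ d θ₀ : ℝ) = 0 ∧ ‖θz - θ₀‖ ≤ C * z := by
  classical
  have hR0 : 0 ≤ R := le_trans (norm_nonneg y₀) (hR y₀ hy₀Q)
  have hQconv : Convex ℝ Q := by rw [hQV]; exact convex_convexHull ℝ _
  set p : EuclideanSpace ℝ (Fin n) → Prop := fun v => 0 < (inner ℝ d v : ℝ) with hp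
  set Vp := V.filter p with hVp
  by_cases hne : Vp.Nonempty
  · -- the minimum positive value of ⟪d,·⟫ over vertices
    obtain ⟨ζ, hζmem, hζmin⟩ :
        ∃ ζ ∈ (Vp.image fun v => (inner ℝ d v : ℝ)), ∀ t ∈ (Vp.image fun v => (inner ℝ d v : ℝ)), ζ ≤ t := by
      obtain ⟨ζ, hζ⟩ := (Vp.image fun v => (inner ℝ d v : ℝ)).exists_min_image id (hne.image _)
      exact ⟨ζ, hζ.1, fun t ht => hζ.2 t ht⟩
    have hζpos : 0 < ζ := by
      obtain ⟨v, hv, hveq⟩ := Finset.mem_image.1 hζmem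
      rw [← hveq]; exact (Finset.mem_filter.1 hv).2
    refine ⟨2 * R / ζ, by positivity, ?_⟩
    intro z θz hθQ hθz hzpos
    -- convex combination representation
    have hθ : θz ∈ convexHull ℝ (V : Set (EuclideanSpace ℝ (Fin n))) := hQV ▸ hθQ
    rw [Finset.convexHull_eq] at hθ
    obtain ⟨w, hw0, hw1, hwx⟩ := hθ
    rw [Finset.centerMass_eq_of_sum_1 _ _ hw1] at hwx
    simp only [id] at hwx
    -- key quantities
    set P : ℝ := ∑ v ∈ Vp, w v * (inner ℝ d v : ℝ) with hP
    set Pt : ℝ := ∑ v ∈ Vp, w v with hPt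
    have hz_sum : z = ∑ v ∈ V, w v * (inner ℝ d v : ℝ) := by
      rw [← hθz, ← hwx, inner_sum]
      exact Finset.sum_congr rfl fun v hv => real_inner_smul_right _ _ _
    have hzP : z ≤ P := by
      rw [hz_sum, ← Finset.sum_filter_add_sum_filter_not V p]
      have h2 : ∑ v ∈ V.filter (fun v => ¬ p v), w v * (inner ℝ d v : ℝ) ≤ 0 := by
        apply Finset.sum_nonpos
        intro v hv
        have hvV := Finset.mem_filter.1 hv
        exact mul_nonpos_of_nonneg_of_nonpos (hw0 v hvV.1) (le_of_not_gt hvV.2)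
      rw [← hVp]
      linarith
    have hPpos : 0 < P := lt_of_lt_of_le hzpos hzP
    set s : ℝ := z / P with hs
    have hs0 : 0 ≤ s := by positivity
    have hs1 : s ≤ 1 := div_le_one_of_le₀ hzP hPpos.le
    have hsP : s * P = z := div_mul_cancel₀ z hPpos.ne'
    -- the shifted point
    set c : EuclideanSpace ℝ (Fin n) → EuclideanSpace ℝ (Fin n) :=
      fun v => if p v then (1 - s) • v + s • y₀ else v with hc
    set θ₀ : EuclideanSpace ℝ (Fin n) := ∑ v ∈ V, w v • c v with hθ₀
    have hcQ : ∀ v ∈ V, c v ∈ Q := by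
      intro v hv
      have hvQ : v ∈ Q := by
        rw [hQV]; exact subset_convexHull ℝ _ (Finset.mem_coe.2 hv)
      by_cases hpv : p v
      · simp only [hc, if_pos hpv]
        exact hQconv hvQ hy₀Q (by linarith) hs0 (by ring)
      · simp only [hc, if_neg hpv]; exact hvQ
    have hθ₀Q : θ₀ ∈ Q := hQconv.sum_mem (fun v hv => hw0 v hv) hw1 hcQ
    have hinner_c : ∀ v, (inner ℝ d (c v) : ℝ)
        = (inner ℝ d v : ℝ) - (if p v then s * (inner ℝ d v : ℝ) else 0) := by
      intro v
      by_cases hpv : p v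
      · simp only [hc, if_pos hpv, inner_add_right, real_inner_smul_right, hy₀]
        ring
      · simp only [hc, if_neg hpv]; ring
    have hθ₀d : (inner ℝ d θ₀ : ℝ) = 0 := by
      rw [hθ₀, inner_sum]
      have : ∀ v ∈ V, (inner ℝ d (w v • c v) : ℝ)
          = w v * (inner ℝ d v : ℝ) - (if p v then w v * (s * (inner ℝ d v : ℝ)) else 0) := by
        intro v hv
        rw [real_inner_smul_right, hinner_c]
        by_cases hpv : p v <;> simp [hpv] <;> ring
      rw [Finset.sum_congr rfl this, Finset.sum_sub_distrib, Finset.sum_ite, Finset.sum_const_zero,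
        add_zero, ← hz_sum]
      have : ∑ v ∈ V.filter p, w v * (s * (inner ℝ d v : ℝ)) = s * P := by
        rw [hP, Finset.mul_sum, ← hVp]
        exact Finset.sum_congr rfl fun v hv => by ring
      rw [this, hsP, sub_self]
    -- the distance bound
    have hdiff : θz - θ₀ = ∑ v ∈ V, (if p v then (w v * s) • (v - y₀) else 0) := by
      rw [← hwx, hθ₀, ← Finset.sum_sub_distrib]
      refine Finset.sum_congr rfl fun v hv => ?_
      by_cases hpv : p v
      · simp only [hc, if_pos hpv]
        module
      · simp only [hc, if_neg hpv, sub_self]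
    have hnorm : ‖θz - θ₀‖ ≤ s * Pt * (2 * R) := by
      rw [hdiff]
      calc ‖∑ v ∈ V, (if p v then (w v * s) • (v - y₀) else 0)‖
          ≤ ∑ v ∈ V, ‖(if p v then (w v * s) • (v - y₀) else 0)‖ := norm_sum_le _ _
        _ ≤ ∑ v ∈ V, (if p v then w v * s * (2 * R) else 0) := by
            apply Finset.sum_le_sum
            intro v hv
            by_cases hpv : p v
            · simp only [if_pos hpv, norm_smul, Real.norm_eq_abs,
                abs_of_nonneg (mul_nonneg (hw0 v hv) hs0)]
              have hvQ : v ∈ Q := by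
                rw [hQV]; exact subset_convexHull ℝ _ (Finset.mem_coe.2 hv)
              have : ‖v - y₀‖ ≤ 2 * R := by
                calc ‖v - y₀‖ ≤ ‖v‖ + ‖y₀‖ := norm_sub_le _ _
                  _ ≤ R + R := add_le_add (hR v hvQ) (hR y₀ hy₀Q)
                  _ = 2 * R := by ring
              exact mul_le_mul_of_nonneg_left this (mul_nonneg (hw0 v hv) hs0)
            · simp [hpv]
        _ = s * Pt * (2 * R) := by
            rw [Finset.sum_ite, Finset.sum_const_zero, add_zero, Finset.mul_sum, Finset.sum_mul]
            exact Finset.sum_congr rfl fun v hv => by ring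
    have hPtP : ζ * Pt ≤ P := by
      rw [hP, hPt, Finset.mul_sum]
      apply Finset.sum_le_sum
      intro v hv
      have hζv : ζ ≤ (inner ℝ d v : ℝ) := hζmin _ (Finset.mem_image_of_mem _ hv)
      have hw0v : 0 ≤ w v := hw0 v (Finset.mem_filter.1 hv).1
      calc ζ * w v = w v * ζ := by ring
        _ ≤ w v * (inner ℝ d v : ℝ) := mul_le_mul_of_nonneg_left hζv hw0v
    have hPt0 : 0 ≤ Pt := Finset.sum_nonneg fun v hv => hw0 v (Finset.mem_filter.1 hv).1
    have hfinal : s * Pt * (2 * R) ≤ 2 * R / ζ * z := by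
      have h1 : s * Pt ≤ z / ζ := by
        rw [hs, div_mul_eq_mul_div, div_le_div_iff₀ hPpos hζpos]
        calc z * Pt * ζ = z * (ζ * Pt) := by ring
          _ ≤ z * P := by
            exact mul_le_mul_of_nonneg_left hPtP hzpos.le
      calc s * Pt * (2 * R) ≤ z / ζ * (2 * R) :=
            mul_le_mul_of_nonneg_right h1 (by positivity)
        _ = 2 * R / ζ * z := by ring
    exact ⟨θ₀, hθ₀Q, hθ₀d, le_trans hnorm hfinal⟩
  · -- no vertex with positive inner product: the hypothesis 0 < z is contradictory
    refine ⟨0, le_refl 0, ?_⟩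
    intro z θz hθQ hθz hzpos
    exfalso
    have hsub : (V : Set (EuclideanSpace ℝ (Fin n))) ⊆ {x | (inner ℝ d x : ℝ) ≤ 0} := by
      intro v hv
      by_contra hvpos
      simp only [Set.mem_setOf_eq, not_le] at hvpos
      exact hne ⟨v, Finset.mem_filter.2 ⟨Finset.mem_coe.1 hv, hvpos⟩⟩
    have hconv : Convex ℝ {x : EuclideanSpace ℝ (Fin n) | (inner ℝ d x : ℝ) ≤ 0} := by
      intro x hx y hy α β hα hβ hαβ
      simp only [Set.mem_setOf_eq] at hx hy ⊢
      rw [inner_add_right, real_inner_smul_right, real_inner_smul_right]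
      have h1 : α * (inner ℝ d x : ℝ) ≤ 0 := mul_nonpos_of_nonneg_of_nonpos hα hx
      have h2 : β * (inner ℝ d y : ℝ) ≤ 0 := mul_nonpos_of_nonneg_of_nonpos hβ hy
      linarith
    have : θz ∈ {x : EuclideanSpace ℝ (Fin n) | (inner ℝ d x : ℝ) ≤ 0} := by
      have := convexHull_min hsub hconv
      exact this (hQV ▸ hθQ)
    simp only [Set.mem_setOf_eq, hθz] at this
    linarith

/-- Bounded shifting lemma (Hoffman-type error bound): let `Q` be a compact
convex polytope in Euclidean space (an intersection of finitely many closed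
half-spaces that is bounded), `d ≠ 0`, and suppose the slice
`Q₀ = {x ∈ Q : ⟪d, x⟫ = 0}` is nonempty. Then there is `C ≥ 0` such that for
every `z` and every `θ_z ∈ Q` with `⟪d, θ_z⟫ = z`, some `θ₀ ∈ Q₀` satisfies
`‖θ_z − θ₀‖ ≤ C·|z|`. -/
theorem stmt_17 (n : ℕ) (Q : Set (EuclideanSpace ℝ (Fin n)))
    (m : ℕ) (a : Fin m → EuclideanSpace ℝ (Fin n)) (b : Fin m → ℝ)
    (hQ : Q = {x | ∀ i, inner ℝ (a i) x ≤ b i})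
    (hcompact : IsCompact Q)
    (d : EuclideanSpace ℝ (Fin n)) (hd : d ≠ 0)
    (hQ0 : ∃ x ∈ Q, (inner ℝ d x : ℝ) = 0) :
    ∃ C : ℝ, 0 ≤ C ∧ ∀ (z : ℝ) (θz : EuclideanSpace ℝ (Fin n)),
      θz ∈ Q → (inner ℝ d θz : ℝ) = z →
      ∃ θ₀ ∈ Q, (inner ℝ d θ₀ : ℝ) = 0 ∧ ‖θz - θ₀‖ ≤ C * |z| := by
  classical
  obtain ⟨y₀, hy₀Q, hy₀⟩ := hQ0
  -- Q is convex
  have hQconv : Convex ℝ Q := by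
    rw [hQ]
    intro x hx y hy α β hα hβ hαβ
    simp only [Set.mem_setOf_eq] at hx hy ⊢
    intro i
    rw [inner_add_right, real_inner_smul_right, real_inner_smul_right]
    have h1 : α * (inner ℝ (a i) x : ℝ) ≤ α * b i := mul_le_mul_of_nonneg_left (hx i) hα
    have h2 : β * (inner ℝ (a i) y : ℝ) ≤ β * b i := mul_le_mul_of_nonneg_left (hy i) hβ
    have : α * b i + β * b i = b i := by rw [← add_mul, hαβ, one_mul]
    linarith
  -- Q is the convex hull of its (finitely many) extreme points
  have hEfin : (Q.extremePoints ℝ).Finite := finite_extremePoints_aux a b Q hQ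
  have hKM : closure (convexHull ℝ (Q.extremePoints ℝ)) = Q :=
    closure_convexHull_extremePoints hcompact hQconv
  have hclosed : IsClosed (convexHull ℝ (Q.extremePoints ℝ)) := hEfin.isClosed_convexHull (𝕜 := ℝ)
  have hQhull : Q = convexHull ℝ (Q.extremePoints ℝ) := by
    rw [hclosed.closure_eq] at hKM
    exact hKM.symm
  set V : Finset (EuclideanSpace ℝ (Fin n)) := hEfin.toFinset with hV
  have hQV : Q = convexHull ℝ (V : Set (EuclideanSpace ℝ (Fin n))) := by
    rw [hV, Set.Finite.coe_toFinset]; exact hQhull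
  -- Q is bounded
  obtain ⟨R, hR⟩ := isBounded_iff_forall_norm_le.1 hcompact.isBounded
  -- apply the one-sided lemma in both directions
  obtain ⟨C₁, hC₁0, hC₁⟩ := aux_shift V Q hQV d y₀ hy₀Q hy₀ R hR
  obtain ⟨C₂, hC₂0, hC₂⟩ := aux_shift V Q hQV (-d) y₀ hy₀Q (by rw [inner_neg_left, hy₀, neg_zero]) R hR
  refine ⟨max C₁ C₂, le_trans hC₁0 (le_max_left _ _), ?_⟩
  intro z θz hθQ hθz
  rcases lt_trichotomy z 0 with hz | hz | hz
  · obtain ⟨θ₀, hθ₀Q, hθ₀d, hbound⟩ :=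
      hC₂ (-z) θz hθQ (by rw [inner_neg_left, hθz]) (by linarith)
    refine ⟨θ₀, hθ₀Q, ?_, ?_⟩
    · have : -(inner ℝ d θ₀ : ℝ) = 0 := by rw [← inner_neg_left]; exact hθ₀d
      linarith
    · calc ‖θz - θ₀‖ ≤ C₂ * (-z) := hbound
        _ ≤ max C₁ C₂ * |z| := by
          rw [abs_of_neg hz]
          exact mul_le_mul_of_nonneg_right (le_max_right _ _) (by linarith)
  · refine ⟨θz, hθQ, by rw [hθz, hz], ?_⟩
    simp [hz]
  · obtain ⟨θ₀, hθ₀Q, hθ₀d, hbound⟩ := hC₁ z θz hθQ hθz hz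
    refine ⟨θ₀, hθ₀Q, hθ₀d, ?_⟩
    calc ‖θz - θ₀‖ ≤ C₁ * z := hbound
      _ ≤ max C₁ C₂ * |z| := by
        rw [abs_of_pos hz]
        exact mul_le_mul_of_nonneg_right (le_max_left _ _) (by linarith)
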